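/- In any pair of orthogonal incomplete binary frequency squares of type (n; n-2), the superposition of the bottom-right 2×2 filled corner contains each of the four ordered pairs (0,0),(0,1),(1,0),(1,1) exactly once, arranged so that no row or column of the 2×2 corner contains a complementary pair (up to isomorphism the corner is [[00,01],[10,11]]). -/
import Mathlib


/-- An incomplete binary frequency square of type (n; n-2): an n×n array
whose top-left (n-2)×(n-2) subarray is empty (its values are irrelevant),
all other cells contain 0 or 1, and every row and every column contains
equally many zeros and ones among its filled cells. -/
def IsIncFS (n : ℕ) (F : Fin n → Fin n → Fin 2) : Prop :=
  (∀ r : Fin n,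
    (Finset.univ.filter fun c : Fin n =>
      ¬((r : ℕ) < n - 2 ∧ (c : ℕ) < n - 2) ∧ F r c = 0).card =
    (Finset.univ.filter fun c : Fin n =>
      ¬((r : ℕ) < n - 2 ∧ (c : ℕ) < n - 2) ∧ F r c = 1).card) ∧
  (∀ c : Fin n,
    (Finset.univ.filter fun r : Fin n =>
      ¬((r : ℕ) < n - 2 ∧ (c : ℕ) < n - 2) ∧ F r c = 0).card =
    (Finset.univ.filter fun r : Fin n =>
      ¬((r : ℕ) < n - 2 ∧ (c : ℕ) < n - 2) ∧ F r c = 1).card)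

/-- Two incomplete frequency squares of type (n; n-2) are orthogonal if each
of the four ordered pairs of symbols occurs equally often over the filled
cells of their superposition. -/
def IncOrth (n : ℕ) (F G : Fin n → Fin n → Fin 2) : Prop :=
  ∀ a b a' b' : Fin 2,
    (Finset.univ.filter fun p : Fin n × Fin n =>
      ¬((p.1 : ℕ) < n - 2 ∧ (p.2 : ℕ) < n - 2) ∧
        F p.1 p.2 = a ∧ G p.1 p.2 = b).card =
    (Finset.univ.filter fun p : Fin n × Fin n =>
      ¬((p.1 : ℕ) < n - 2 ∧ (p.2 : ℕ) < n - 2) ∧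
        F p.1 p.2 = a' ∧ G p.1 p.2 = b').card

/- ---------- auxiliary lemmas ---------- -/

lemma fin2_cases : ∀ a : Fin 2, a = 0 ∨ a = 1 := by decide
lemma fin2_sub_iff : ∀ x a : Fin 2, (1 - x = a) ↔ (x = 1 - a) := by decide

lemma filterNot_eq_pair {n : ℕ} (r1 r2 : Fin n) (h1 : (r1:ℕ) = n-2) (h2 : (r2:ℕ) = n-1) :
    (Finset.univ.filter fun c : Fin n => ¬ (c:ℕ) < n-2) = {r1, r2} := by
  ext c
  have hc := c.isLt
  simp only [Finset.mem_filter, Finset.mem_univ, true_and, Finset.mem_insert,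
    Finset.mem_singleton, Fin.ext_iff, h1, h2]
  omega

lemma pair_ne {n : ℕ} (hn : 4 ≤ n) (r1 r2 : Fin n) (h1 : (r1:ℕ) = n-2) (h2 : (r2:ℕ) = n-1) :
    r1 ≠ r2 := by
  simp only [ne_eq, Fin.ext_iff, h1, h2]; omega

lemma compl_row {n : ℕ} (hn : 4 ≤ n) {F : Fin n → Fin n → Fin 2} (hF : IsIncFS n F)
    (r1 r2 : Fin n) (h1 : (r1:ℕ) = n-2) (h2 : (r2:ℕ) = n-1)
    (r : Fin n) (hr : (r:ℕ) < n-2) : F r r2 = 1 - F r r1 := by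
  have h := hF.1 r
  have hs : ∀ v : Fin 2, (Finset.univ.filter fun c : Fin n =>
      ¬((r : ℕ) < n - 2 ∧ (c : ℕ) < n - 2) ∧ F r c = v) =
      ({r1, r2} : Finset (Fin n)).filter (fun c => F r c = v) := by
    intro v
    ext c
    have hc := c.isLt
    simp only [Finset.mem_filter, Finset.mem_univ, true_and, Finset.mem_insert,
      Finset.mem_singleton, Fin.ext_iff, h1, h2]
    constructor
    · rintro ⟨h', hv⟩; exact ⟨by omega, hv⟩
    · rintro ⟨h', hv⟩; exact ⟨by omega, hv⟩
  rw [hs 0, hs 1] at h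
  have hne12 : r1 ≠ r2 := pair_ne hn r1 r2 h1 h2
  rcases fin2_cases (F r r1) with hx | hx <;>
    rcases fin2_cases (F r r2) with hy | hy <;>
      simp [Finset.filter_insert, Finset.filter_singleton, hx, hy, hne12] at h ⊢

lemma compl_col {n : ℕ} (hn : 4 ≤ n) {F : Fin n → Fin n → Fin 2} (hF : IsIncFS n F)
    (r1 r2 : Fin n) (h1 : (r1:ℕ) = n-2) (h2 : (r2:ℕ) = n-1)
    (c : Fin n) (hc : (c:ℕ) < n-2) : F r2 c = 1 - F r1 c := by
  have h := hF.2 c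
  have hs : ∀ v : Fin 2, (Finset.univ.filter fun r : Fin n =>
      ¬((r : ℕ) < n - 2 ∧ (c : ℕ) < n - 2) ∧ F r c = v) =
      ({r1, r2} : Finset (Fin n)).filter (fun r => F r c = v) := by
    intro v
    ext r
    have hr := r.isLt
    simp only [Finset.mem_filter, Finset.mem_univ, true_and, Finset.mem_insert,
      Finset.mem_singleton, Fin.ext_iff, h1, h2]
    constructor
    · rintro ⟨h', hv⟩; exact ⟨by omega, hv⟩
    · rintro ⟨h', hv⟩; exact ⟨by omega, hv⟩
  rw [hs 0, hs 1] at h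
  have hne12 : r1 ≠ r2 := pair_ne hn r1 r2 h1 h2
  rcases fin2_cases (F r1 c) with hx | hx <;>
    rcases fin2_cases (F r2 c) with hy | hy <;>
      simp [Finset.filter_insert, Finset.filter_singleton, hx, hy, hne12] at h ⊢

/-- count of cells in the short part of a line carrying the pair (a,b) -/
def lineCnt (n : ℕ) (f g : Fin n → Fin 2) (a b : Fin 2) : ℕ :=
  ∑ x ∈ Finset.univ.filter (fun x : Fin n => (x:ℕ) < n-2), if f x = a ∧ g x = b then 1 else 0

lemma master {n : ℕ} (hn : 4 ≤ n) {F G : Fin n → Fin n → Fin 2}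
    (hF : IsIncFS n F) (hG : IsIncFS n G)
    (r1 r2 : Fin n) (h1 : (r1:ℕ) = n-2) (h2 : (r2:ℕ) = n-1) (a b : Fin 2) :
    (Finset.univ.filter fun p : Fin n × Fin n =>
      ¬((p.1 : ℕ) < n - 2 ∧ (p.2 : ℕ) < n - 2) ∧ F p.1 p.2 = a ∧ G p.1 p.2 = b).card
    = lineCnt n (fun r => F r r1) (fun r => G r r1) a b
    + lineCnt n (fun r => F r r1) (fun r => G r r1) (1-a) (1-b)
    + lineCnt n (F r1) (G r1) a b + lineCnt n (F r1) (G r1) (1-a) (1-b)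
    + ((if F r1 r1 = a ∧ G r1 r1 = b then 1 else 0) + (if F r1 r2 = a ∧ G r1 r2 = b then 1 else 0)
     + (if F r2 r1 = a ∧ G r2 r1 = b then 1 else 0) + (if F r2 r2 = a ∧ G r2 r2 = b then 1 else 0)) := by
  have hne12 : r1 ≠ r2 := pair_ne hn r1 r2 h1 h2
  have hnotr1 : ¬ (r1:ℕ) < n-2 := by omega
  have hnotr2 : ¬ (r2:ℕ) < n-2 := by omega
  rw [Finset.card_filter, Fintype.sum_prod_type]
  rw [← Finset.sum_filter_add_sum_filter_not Finset.univ (fun r : Fin n => (r:ℕ) < n-2)]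
  have hpart1 : (∑ r ∈ Finset.univ.filter (fun r : Fin n => (r:ℕ) < n-2),
        ∑ c : Fin n, if ¬((r:ℕ) < n-2 ∧ (c:ℕ) < n-2) ∧ F r c = a ∧ G r c = b then (1:ℕ) else 0)
      = lineCnt n (fun r => F r r1) (fun r => G r r1) a b
      + lineCnt n (fun r => F r r1) (fun r => G r r1) (1-a) (1-b) := by
    rw [lineCnt, lineCnt, ← Finset.sum_add_distrib]
    apply Finset.sum_congr rfl
    intro r hr
    simp only [Finset.mem_filter, Finset.mem_univ, true_and] at hr
    have hstep : ∀ c : Fin n, (if ¬((r:ℕ) < n-2 ∧ (c:ℕ) < n-2) ∧ F r c = a ∧ G r c = b then (1:ℕ) else 0)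
        = if ¬(c:ℕ) < n-2 then (if F r c = a ∧ G r c = b then 1 else 0) else 0 := by
      intro c
      by_cases hc : (c:ℕ) < n-2 <;> simp [hc, hr]
    rw [Finset.sum_congr rfl (fun c _ => hstep c), ← Finset.sum_filter,
      filterNot_eq_pair r1 r2 h1 h2, Finset.sum_pair hne12]
    congr 1
    rw [compl_row hn hF r1 r2 h1 h2 r hr, compl_row hn hG r1 r2 h1 h2 r hr]
    simp only [fin2_sub_iff]
  rw [hpart1, filterNot_eq_pair r1 r2 h1 h2, Finset.sum_pair hne12]
  have hrow : ∀ r : Fin n, ¬ (r:ℕ) < n-2 →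
      (∑ c : Fin n, if ¬((r:ℕ) < n-2 ∧ (c:ℕ) < n-2) ∧ F r c = a ∧ G r c = b then (1:ℕ) else 0)
      = (∑ c ∈ Finset.univ.filter (fun c : Fin n => (c:ℕ) < n-2),
          if F r c = a ∧ G r c = b then (1:ℕ) else 0)
      + ((if F r r1 = a ∧ G r r1 = b then 1 else 0) + (if F r r2 = a ∧ G r r2 = b then 1 else 0)) := by
    intro r hr
    have hstep : ∀ c : Fin n, (if ¬((r:ℕ) < n-2 ∧ (c:ℕ) < n-2) ∧ F r c = a ∧ G r c = b then (1:ℕ) else 0)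
        = if F r c = a ∧ G r c = b then 1 else 0 := by
      intro c; simp [hr]
    rw [Finset.sum_congr rfl (fun c _ => hstep c),
      ← Finset.sum_filter_add_sum_filter_not Finset.univ (fun c : Fin n => (c:ℕ) < n-2),
      filterNot_eq_pair r1 r2 h1 h2, Finset.sum_pair hne12]
  rw [hrow r1 hnotr1, hrow r2 hnotr2]
  have hr2line : (∑ c ∈ Finset.univ.filter (fun c : Fin n => (c:ℕ) < n-2),
      if F r2 c = a ∧ G r2 c = b then (1:ℕ) else 0) = lineCnt n (F r1) (G r1) (1-a) (1-b) := by
    rw [lineCnt]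
    apply Finset.sum_congr rfl
    intro c hc
    simp only [Finset.mem_filter, Finset.mem_univ, true_and] at hc
    beta_reduce
    rw [compl_col hn hF r1 r2 h1 h2 c hc, compl_col hn hG r1 r2 h1 h2 c hc]
    simp only [fin2_sub_iff]
  rw [hr2line]
  have hr1line : (∑ c ∈ Finset.univ.filter (fun c : Fin n => (c:ℕ) < n-2),
      if F r1 c = a ∧ G r1 c = b then (1:ℕ) else 0) = lineCnt n (F r1) (G r1) a b := rfl
  rw [hr1line]
  ring

lemma line_parity {n : ℕ} (hne : Even n) (f g : Fin n → Fin 2)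
    (hf : (Finset.univ.filter fun r => f r = 0).card = (Finset.univ.filter fun r => f r = 1).card)
    (hg : (Finset.univ.filter fun r => g r = 0).card = (Finset.univ.filter fun r => g r = 1).card) :
    2 ∣ ∑ r : Fin n, (if f r = g r then (1:ℕ) else 0) := by
  rw [Finset.card_filter, Finset.card_filter] at hf hg
  have key : ∀ x y : Fin 2, (if x ≠ y then (1:ℕ) else 0) + 2 * (if x = 1 ∧ y = 1 then 1 else 0)
      = (if x = 1 then 1 else 0) + (if y = 1 then 1 else 0) := by decide
  have key2 : ∀ x y : Fin 2, (if x = y then (1:ℕ) else 0) + (if x ≠ y then 1 else 0) = 1 := by decide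
  have key3 : ∀ x : Fin 2, (if x = 0 then (1:ℕ) else 0) + (if x = 1 then 1 else 0) = 1 := by decide
  have hA : ∑ r : Fin n, ((if f r ≠ g r then (1:ℕ) else 0) + 2 * (if f r = 1 ∧ g r = 1 then 1 else 0))
      = ∑ r : Fin n, ((if f r = 1 then (1:ℕ) else 0) + (if g r = 1 then 1 else 0)) :=
    Finset.sum_congr rfl (fun r _ => key (f r) (g r))
  have hB : ∑ r : Fin n, ((if f r = g r then (1:ℕ) else 0) + (if f r ≠ g r then 1 else 0))
      = ∑ r : Fin n, (1:ℕ) := Finset.sum_congr rfl (fun r _ => key2 (f r) (g r))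
  have hCf : ∑ r : Fin n, ((if f r = 0 then (1:ℕ) else 0) + (if f r = 1 then 1 else 0))
      = ∑ r : Fin n, (1:ℕ) := Finset.sum_congr rfl (fun r _ => key3 (f r))
  have hCg : ∑ r : Fin n, ((if g r = 0 then (1:ℕ) else 0) + (if g r = 1 then 1 else 0))
      = ∑ r : Fin n, (1:ℕ) := Finset.sum_congr rfl (fun r _ => key3 (g r))
  have hn : ∑ r : Fin n, (1:ℕ) = n := by simp
  rw [Finset.sum_add_distrib, Finset.sum_add_distrib, ← Finset.mul_sum] at hA
  rw [Finset.sum_add_distrib] at hB hCf hCg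
  rw [hn] at hB hCf hCg
  obtain ⟨m, hm⟩ := hne
  omega

set_option maxRecDepth 4000 in
lemma corner_decide : ∀ v11 v12 v21 v22 w11 w12 w21 w22 : Fin 2,
    ((if v11 = 0 ∧ w11 = 0 then (1:ℕ) else 0) + (if v12 = 0 ∧ w12 = 0 then 1 else 0)
      + (if v21 = 0 ∧ w21 = 0 then 1 else 0) + (if v22 = 0 ∧ w22 = 0 then 1 else 0)
      = (if v11 = 1 ∧ w11 = 1 then 1 else 0) + (if v12 = 1 ∧ w12 = 1 then 1 else 0)
      + (if v21 = 1 ∧ w21 = 1 then 1 else 0) + (if v22 = 1 ∧ w22 = 1 then 1 else 0)) →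
    ((if v11 = 0 ∧ w11 = 1 then (1:ℕ) else 0) + (if v12 = 0 ∧ w12 = 1 then 1 else 0)
      + (if v21 = 0 ∧ w21 = 1 then 1 else 0) + (if v22 = 0 ∧ w22 = 1 then 1 else 0)
      = (if v11 = 1 ∧ w11 = 0 then 1 else 0) + (if v12 = 1 ∧ w12 = 0 then 1 else 0)
      + (if v21 = 1 ∧ w21 = 0 then 1 else 0) + (if v22 = 1 ∧ w22 = 0 then 1 else 0)) →
    (((if v11 = w11 then (1:ℕ) else 0) + (if v21 = w21 then 1 else 0)
      + ((if v12 = w12 then 1 else 0) + (if v22 = w22 then 1 else 0))) % 2 = 0) →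
    (((if v11 = w11 then (1:ℕ) else 0) + (if v12 = w12 then 1 else 0)
      + ((if v21 = w21 then 1 else 0) + (if v22 = w22 then 1 else 0))) % 2 = 0) →
    (((if v11 = w11 then (1:ℕ) else 0) + (if v21 = w21 then 1 else 0)
      + ((if v11 = w11 then 1 else 0) + (if v12 = w12 then 1 else 0))
      + ((if v11 = 0 ∧ w11 = 0 then 1 else 0) + (if v12 = 0 ∧ w12 = 0 then 1 else 0)
        + (if v21 = 0 ∧ w21 = 0 then 1 else 0) + (if v22 = 0 ∧ w22 = 0 then 1 else 0))) % 2 = 1) →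
    (([(v11, w11), (v12, w12), (v21, w21), (v22, w22)] : List (Fin 2 × Fin 2)).Nodup ∧
     (v11, w11) ≠ (1 - v12, 1 - w12) ∧
     (v21, w21) ≠ (1 - v22, 1 - w22) ∧
     (v11, w11) ≠ (1 - v21, 1 - w21) ∧
     (v12, w12) ≠ (1 - v22, 1 - w22)) := by decide

lemma arith_tot {N00 N01 N10 N11 lR00 lR01 lR10 lR11 lB00 lB01 lB10 lB11
    p100 p101 p110 p111 p200 p201 p210 p211 p300 p301 p310 p311 p400 p401 p410 p411 n : ℕ}
    (hn : 4 ≤ n)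
    (hm00 : N00 = lR00 + lR11 + lB00 + lB11 + (p100 + p200 + p300 + p400))
    (hm01 : N01 = lR01 + lR10 + lB01 + lB10 + (p101 + p201 + p301 + p401))
    (hm10 : N10 = lR10 + lR01 + lB10 + lB01 + (p110 + p210 + p310 + p410))
    (hm11 : N11 = lR11 + lR00 + lB11 + lB00 + (p111 + p211 + p311 + p411))
    (ho01 : N00 = N01) (ho10 : N00 = N10) (ho11 : N00 = N11)
    (hls1 : lR00 + lR01 + lR10 + lR11 = n - 2)
    (hls2 : lB00 + lB01 + lB10 + lB11 = n - 2)
    (k1 : p100 + p101 + p110 + p111 = 1)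
    (k2 : p200 + p201 + p210 + p211 = 1)
    (k3 : p300 + p301 + p310 + p311 = 1)
    (k4 : p400 + p401 + p410 + p411 = 1) :
    N00 = n - 1 := by omega

lemma arith_eq {N0 N1 A B C D e0 e1 : ℕ}
    (h0 : N0 = A + B + C + D + e0) (h1 : N1 = B + A + D + C + e1) (ho : N0 = N1) :
    e0 = e1 := by omega

lemma arith_par {x D1 D2 : ℕ} (P1 : 2 ∣ x + D1) (P2 : 2 ∣ x + D2) :
    (D1 + D2) % 2 = 0 := by omega

lemma arith_c5 {N A B C D e D13 D12 n m : ℕ} (hn : 4 ≤ n) (hmn : n = m + m)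
    (h0 : N = A + B + C + D + e) (hN : N = n - 1)
    (P1 : 2 ∣ A + B + D13) (P3 : 2 ∣ C + D + D12) :
    (D13 + D12 + e) % 2 = 1 := by omega

/- ---------- main theorem ---------- -/

/-- In any pair of orthogonal incomplete frequency squares of type (n; n-2),
the superposition of the bottom-right 2×2 corner (rows and columns n-2, n-1)
contains each of the four ordered pairs exactly once, arranged so that no row
or column of the corner contains a complementary pair of tuples. -/
theorem stmt_19 (n : ℕ) (hn : 4 ≤ n) (hne : Even n)
    (F G : Fin n → Fin n → Fin 2)
    (hF : IsIncFS n F) (hG : IsIncFS n G) (h : IncOrth n F G) :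
    ∀ r1 r2 : Fin n, (r1 : ℕ) = n - 2 → (r2 : ℕ) = n - 1 →
      (([(F r1 r1, G r1 r1), (F r1 r2, G r1 r2),
         (F r2 r1, G r2 r1), (F r2 r2, G r2 r2)] : List (Fin 2 × Fin 2)).Nodup ∧
       -- no row of the corner contains a complementary pair
       (F r1 r1, G r1 r1) ≠ (1 - F r1 r2, 1 - G r1 r2) ∧
       (F r2 r1, G r2 r1) ≠ (1 - F r2 r2, 1 - G r2 r2) ∧
       -- no column of the corner contains a complementary pair
       (F r1 r1, G r1 r1) ≠ (1 - F r2 r1, 1 - G r2 r1) ∧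
       (F r1 r2, G r1 r2) ≠ (1 - F r2 r2, 1 - G r2 r2)) := by
  intro r1 r2 h1 h2
  have hne12 : r1 ≠ r2 := pair_ne hn r1 r2 h1 h2
  have hnotr1 : ¬ (r1:ℕ) < n-2 := by omega
  have hnotr2 : ¬ (r2:ℕ) < n-2 := by omega
  -- instantiate the master decomposition at the four symbol pairs
  have hm00 := master hn hF hG r1 r2 h1 h2 0 0
  have hm01 := master hn hF hG r1 r2 h1 h2 0 1
  have hm10 := master hn hF hG r1 r2 h1 h2 1 0
  have hm11 := master hn hF hG r1 r2 h1 h2 1 1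
  simp only [show (1 - (0:Fin 2)) = 1 from rfl, show (1 - (1:Fin 2)) = 0 from rfl]
    at hm00 hm01 hm10 hm11
  -- orthogonality instances
  have ho01 := h 0 0 0 1
  have ho10 := h 0 0 1 0
  have ho11 := h 0 0 1 1
  have hoX := h 0 1 1 0
  -- sum of the four lineCnt values over one short line is n-2
  have hcardlt : (Finset.univ.filter fun r : Fin n => (r:ℕ) < n-2).card = n-2 := by
    have hp := Finset.card_filter_add_card_filter_not
      (s := (Finset.univ : Finset (Fin n))) (p := fun r : Fin n => (r:ℕ) < n-2)
    rw [filterNot_eq_pair r1 r2 h1 h2] at hp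
    have h2' : ({r1, r2} : Finset (Fin n)).card = 2 := by
      rw [Finset.card_insert_of_notMem (by simp [hne12]), Finset.card_singleton]
    simp only [Finset.card_univ, Fintype.card_fin] at hp
    omega
  have key4 : ∀ v w : Fin 2, (if v = 0 ∧ w = 0 then (1:ℕ) else 0) + (if v = 0 ∧ w = 1 then 1 else 0)
      + (if v = 1 ∧ w = 0 then 1 else 0) + (if v = 1 ∧ w = 1 then 1 else 0) = 1 := by decide
  have hlinesum : ∀ f g : Fin n → Fin 2,
      lineCnt n f g 0 0 + lineCnt n f g 0 1 + lineCnt n f g 1 0 + lineCnt n f g 1 1 = n - 2 := by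
    intro f g
    unfold lineCnt
    rw [← Finset.sum_add_distrib, ← Finset.sum_add_distrib, ← Finset.sum_add_distrib]
    rw [Finset.sum_congr rfl (fun x _ => key4 (f x) (g x)), Finset.sum_const, hcardlt,
      smul_eq_mul, mul_one]
  have hls1 := hlinesum (fun r => F r r1) (fun r => G r r1)
  have hls2 := hlinesum (F r1) (G r1)
  -- parity facts for the four full lines
  have keyEq : ∀ x y : Fin 2, (if x = y then (1:ℕ) else 0)
      = (if x = 0 ∧ y = 0 then 1 else 0) + (if x = 1 ∧ y = 1 then 1 else 0) := by decide
  have hsplit : ∀ f g : Fin n → Fin 2,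
      (∑ r : Fin n, if f r = g r then (1:ℕ) else 0)
      = lineCnt n f g 0 0 + lineCnt n f g 1 1
        + ((if f r1 = g r1 then 1 else 0) + (if f r2 = g r2 then 1 else 0)) := by
    intro f g
    rw [← Finset.sum_filter_add_sum_filter_not Finset.univ (fun r : Fin n => (r:ℕ) < n-2),
      filterNot_eq_pair r1 r2 h1 h2, Finset.sum_pair hne12]
    congr 1
    unfold lineCnt
    rw [← Finset.sum_add_distrib]
    exact Finset.sum_congr rfl (fun r _ => keyEq (f r) (g r))
  -- balance of full lines
  have hcolbal : ∀ (H : Fin n → Fin n → Fin 2), IsIncFS n H → ∀ c : Fin n, ¬ (c:ℕ) < n-2 →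
      (Finset.univ.filter fun r : Fin n => H r c = 0).card
        = (Finset.univ.filter fun r : Fin n => H r c = 1).card := by
    intro H hH c hc
    have hx := hH.2 c
    have hconv : ∀ v : Fin 2, (Finset.univ.filter fun r : Fin n =>
        ¬((r : ℕ) < n - 2 ∧ (c : ℕ) < n - 2) ∧ H r c = v)
        = Finset.univ.filter fun r : Fin n => H r c = v := by
      intro v; ext r; simp [hc]
    rwa [hconv 0, hconv 1] at hx
  have hrowbal : ∀ (H : Fin n → Fin n → Fin 2), IsIncFS n H → ∀ r : Fin n, ¬ (r:ℕ) < n-2 →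
      (Finset.univ.filter fun c : Fin n => H r c = 0).card
        = (Finset.univ.filter fun c : Fin n => H r c = 1).card := by
    intro H hH r hr
    have hx := hH.1 r
    have hconv : ∀ v : Fin 2, (Finset.univ.filter fun c : Fin n =>
        ¬((r : ℕ) < n - 2 ∧ (c : ℕ) < n - 2) ∧ H r c = v)
        = Finset.univ.filter fun c : Fin n => H r c = v := by
      intro v; ext cc; simp [hr]
    rwa [hconv 0, hconv 1] at hx
  -- column r1 parity
  have P1 : 2 ∣ lineCnt n (fun r => F r r1) (fun r => G r r1) 0 0
      + lineCnt n (fun r => F r r1) (fun r => G r r1) 1 1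
      + ((if F r1 r1 = G r1 r1 then 1 else 0) + (if F r2 r1 = G r2 r1 then 1 else 0)) := by
    have hp := line_parity hne (fun r => F r r1) (fun r => G r r1)
      (hcolbal F hF r1 hnotr1) (hcolbal G hG r1 hnotr1)
    rwa [hsplit (fun r => F r r1) (fun r => G r r1)] at hp
  -- column r2 parity, converted to column-r1 lineCnt
  have hconvcol : lineCnt n (fun r => F r r2) (fun r => G r r2) 0 0
      + lineCnt n (fun r => F r r2) (fun r => G r r2) 1 1
      = lineCnt n (fun r => F r r1) (fun r => G r r1) 0 0
      + lineCnt n (fun r => F r r1) (fun r => G r r1) 1 1 := by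
    unfold lineCnt
    rw [← Finset.sum_add_distrib, ← Finset.sum_add_distrib]
    apply Finset.sum_congr rfl
    intro r hr
    simp only [Finset.mem_filter, Finset.mem_univ, true_and] at hr
    beta_reduce
    rw [compl_row hn hF r1 r2 h1 h2 r hr, compl_row hn hG r1 r2 h1 h2 r hr]
    have : ∀ x y : Fin 2, ((if 1-x = 0 ∧ 1-y = 0 then (1:ℕ) else 0)
        + (if 1-x = 1 ∧ 1-y = 1 then 1 else 0))
        = (if x = 0 ∧ y = 0 then 1 else 0) + (if x = 1 ∧ y = 1 then 1 else 0) := by decide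
    exact this (F r r1) (G r r1)
  have P2 : 2 ∣ lineCnt n (fun r => F r r1) (fun r => G r r1) 0 0
      + lineCnt n (fun r => F r r1) (fun r => G r r1) 1 1
      + ((if F r1 r2 = G r1 r2 then 1 else 0) + (if F r2 r2 = G r2 r2 then 1 else 0)) := by
    have hp := line_parity hne (fun r => F r r2) (fun r => G r r2)
      (hcolbal F hF r2 hnotr2) (hcolbal G hG r2 hnotr2)
    rw [hsplit (fun r => F r r2) (fun r => G r r2), hconvcol] at hp
    exact hp
  -- row r1 parity
  have P3 : 2 ∣ lineCnt n (F r1) (G r1) 0 0 + lineCnt n (F r1) (G r1) 1 1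
      + ((if F r1 r1 = G r1 r1 then 1 else 0) + (if F r1 r2 = G r1 r2 then 1 else 0)) := by
    have hp := line_parity hne (F r1) (G r1)
      (hrowbal F hF r1 hnotr1) (hrowbal G hG r1 hnotr1)
    rwa [hsplit (F r1) (G r1)] at hp
  -- row r2 parity, converted
  have hconvrow : lineCnt n (F r2) (G r2) 0 0 + lineCnt n (F r2) (G r2) 1 1
      = lineCnt n (F r1) (G r1) 0 0 + lineCnt n (F r1) (G r1) 1 1 := by
    unfold lineCnt
    rw [← Finset.sum_add_distrib, ← Finset.sum_add_distrib]
    apply Finset.sum_congr rfl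
    intro c hc
    simp only [Finset.mem_filter, Finset.mem_univ, true_and] at hc
    beta_reduce
    rw [compl_col hn hF r1 r2 h1 h2 c hc, compl_col hn hG r1 r2 h1 h2 c hc]
    have : ∀ x y : Fin 2, ((if 1-x = 0 ∧ 1-y = 0 then (1:ℕ) else 0)
        + (if 1-x = 1 ∧ 1-y = 1 then 1 else 0))
        = (if x = 0 ∧ y = 0 then 1 else 0) + (if x = 1 ∧ y = 1 then 1 else 0) := by decide
    exact this (F r1 c) (G r1 c)
  have P4 : 2 ∣ lineCnt n (F r1) (G r1) 0 0 + lineCnt n (F r1) (G r1) 1 1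
      + ((if F r2 r1 = G r2 r1 then 1 else 0) + (if F r2 r2 = G r2 r2 then 1 else 0)) := by
    have hp := line_parity hne (F r2) (G r2)
      (hrowbal F hF r2 hnotr2) (hrowbal G hG r2 hnotr2)
    rw [hsplit (F r2) (G r2), hconvrow] at hp
    exact hp
  have k1 := key4 (F r1 r1) (G r1 r1)
  have k2 := key4 (F r1 r2) (G r1 r2)
  have k3 := key4 (F r2 r1) (G r2 r1)
  have k4 := key4 (F r2 r2) (G r2 r2)
  obtain ⟨m, hm⟩ := hne
  have hN00 := arith_tot hn hm00 hm01 hm10 hm11 ho01 ho10 ho11 hls1 hls2 k1 k2 k3 k4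
  have C1 := arith_eq hm00 hm11 ho11
  have C2 := arith_eq hm01 hm10 (ho01.symm.trans ho10)
  have C3 := arith_par P1 P2
  have C4 := arith_par P3 P4
  have C5 := arith_c5 hn hm hm00 hN00 P1 P3
  exact corner_decide (F r1 r1) (F r1 r2) (F r2 r1) (F r2 r2)
    (G r1 r1) (G r1 r2) (G r2 r1) (G r2 r2) C1 C2 C3 C4 C5
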